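/- Let M ≥ 1 and 1 ≤ n ≤ M. Let Q₀^{(j)}, Q₁^{(j)} (0 ≤ j ≤ M−1) be positive integers and E ≥ 0 an integer. Define E^{(0)} = E and, for j = 1, 2, …, M: E^{(j)} = E^{(j−1)} + Q₀^{(M−j)} − min(E^{(j−1)}, Q₁^{(M−j)}), Q̃₀^{(M−j)} = Q₁^{(M−j)} + Q₀^{(M−j)} − min(E^{(j−1)}, Q₁^{(M−j)}), and Q̃₁^{(M−j)} = min(E^{(j−1)}, Q₁^{(M−j)}). Then max_{1≤k≤n} ( Σ_{i=0}^{k−1} Q₀^{(i)} + Σ_{j=k−1}^{n−1} Q₁^{(j)} ) = max_{1≤k≤n} ( Σ_{i=0}^{k−1} Q̃₀^{(i)} + Σ_{j=k−1}^{n−1} Q̃₁^{(j)} ); that is, the piecewise-linear Schensted row lengths η_n are invariant under the ultradiscrete birational transformation. -/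
import Mathlib


/-- `uE M Q0 Q1 E j = E^{(j)}`: the ultradiscrete carrier recursion
`E^{(0)} = E`, `E^{(j)} = E^{(j-1)} + Q0^{(M-j)} - min(E^{(j-1)}, Q1^{(M-j)})`. -/
def uE (M : ℕ) (Q0 Q1 : ℕ → ℤ) (E : ℤ) : ℕ → ℤ
  | 0 => E
  | j + 1 => uE M Q0 Q1 E j + Q0 (M - j - 1) - min (uE M Q0 Q1 E j) (Q1 (M - j - 1))

lemma uE_step (M : ℕ) (Q0 Q1 : ℕ → ℤ) (E : ℤ) {i : ℕ} (hi : i < M) :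
    uE M Q0 Q1 E (M - i) =
      uE M Q0 Q1 E (M - i - 1) + Q0 i - min (uE M Q0 Q1 E (M - i - 1)) (Q1 i) := by
  have h : M - i = (M - i - 1) + 1 := by omega
  rw [h, uE]
  have h2 : M - (M - i - 1) - 1 = i := by omega
  rw [h2]
  simp

lemma uE_tele (M : ℕ) (Q0 Q1 : ℕ → ℤ) (E : ℤ) :
    ∀ k, k ≤ M → ∑ i ∈ Finset.range k, Q0 i =
      uE M Q0 Q1 E M - uE M Q0 Q1 E (M - k)
        + ∑ i ∈ Finset.range k, min (uE M Q0 Q1 E (M - i - 1)) (Q1 i) := by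
  intro k
  induction k with
  | zero => simp
  | succ k ih =>
    intro hk
    have hkM : k < M := by omega
    rw [Finset.sum_range_succ, ih (by omega), Finset.sum_range_succ,
      uE_step M Q0 Q1 E hkM]
    have h : M - (k + 1) = M - k - 1 := by omega
    rw [h]
    ring

/-- the piecewise-linear Schensted row lengths `η_n` are invariant under the
ultradiscrete birational transformation
`Q̃0^{(M-j)} = Q1^{(M-j)} + Q0^{(M-j)} - min(E^{(j-1)}, Q1^{(M-j)})`,
`Q̃1^{(M-j)} = min(E^{(j-1)}, Q1^{(M-j)})`. -/
theorem stmt_13 (M : ℕ) (hM : 1 ≤ M) (Q0 Q1 : ℕ → ℤ) (E : ℤ)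
    (hQ0 : ∀ j < M, 0 < Q0 j) (hQ1 : ∀ j < M, 0 < Q1 j) (hE : 0 ≤ E) :
    let Qt0 : ℕ → ℤ := fun s => Q1 s + Q0 s - min (uE M Q0 Q1 E (M - s - 1)) (Q1 s)
    let Qt1 : ℕ → ℤ := fun s => min (uE M Q0 Q1 E (M - s - 1)) (Q1 s)
    ∀ n, ∀ hn : 1 ≤ n, n ≤ M →
      ((Finset.Icc 1 n).sup' (Finset.nonempty_Icc.mpr hn) fun k =>
          (∑ i ∈ Finset.range k, Q0 i) + ∑ j ∈ Finset.Ico (k - 1) n, Q1 j)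
        = ((Finset.Icc 1 n).sup' (Finset.nonempty_Icc.mpr hn) fun k =>
          (∑ i ∈ Finset.range k, Qt0 i) + ∑ j ∈ Finset.Ico (k - 1) n, Qt1 j) := by
  intro Qt0 Qt1 n hn hnM
  set b : ℕ → ℤ := fun t => min (uE M Q0 Q1 E (M - t - 1)) (Q1 t) with hb
  set ψ : ℕ → ℤ := fun t => Q1 t - b t with hψ
  set φ : ℕ → ℤ := fun t => uE M Q0 Q1 E (M - t - 1) - b t with hφ
  set D : ℤ := uE M Q0 Q1 E M + ∑ i ∈ Finset.range n, Q1 i with hD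
  have hψ0 : ∀ t, 0 ≤ ψ t := fun t => by simp [hψ, hb]
  have hφ0 : ∀ t, 0 ≤ φ t := fun t => by simp [hφ, hb]
  have horth : ∀ t, 0 < ψ t → φ t = 0 := by
    intro t ht
    rcases le_total (uE M Q0 Q1 E (M - t - 1)) (Q1 t) with h | h
    · simp [hφ, hb, min_eq_left h]
    · exfalso; simp [hψ, hb, min_eq_right h] at ht
  -- pointwise closed forms
  have keyL : ∀ k ∈ Finset.Icc 1 n,
      (∑ i ∈ Finset.range k, Q0 i) + ∑ j ∈ Finset.Ico (k - 1) n, Q1 j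
        = D - (∑ i ∈ Finset.range (k - 1), ψ i) - φ (k - 1) := by
    intro k hk
    rw [Finset.mem_Icc] at hk
    obtain ⟨t, rfl⟩ : ∃ t, k = t + 1 := ⟨k - 1, by omega⟩
    have htn : t < n := by omega
    simp only [Nat.add_sub_cancel]
    rw [uE_tele M Q0 Q1 E (t + 1) (by omega),
      Finset.sum_eq_sum_Ico_succ_bot htn Q1, hD]
    have hψsum : ∑ i ∈ Finset.range t, ψ i
        = (∑ i ∈ Finset.range t, Q1 i) - ∑ i ∈ Finset.range t, b i := by
      simp only [hψ]; rw [Finset.sum_sub_distrib]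
    have h1 : ∑ i ∈ Finset.range n, Q1 i
        = (∑ i ∈ Finset.range t, Q1 i) + Q1 t + ∑ j ∈ Finset.Ico (t + 1) n, Q1 j := by
      have e1 := Finset.sum_range_add_sum_Ico Q1 (show t + 1 ≤ n by omega)
      have e2 := Finset.sum_range_succ Q1 t
      omega
    rw [hψsum, h1, Finset.sum_range_succ]
    simp only [hφ, hb, Nat.sub_sub]
    ring
  have keyR : ∀ k ∈ Finset.Icc 1 n,
      (∑ i ∈ Finset.range k, Qt0 i) + ∑ j ∈ Finset.Ico (k - 1) n, Qt1 j
        = D - (∑ i ∈ Finset.Ico k n, ψ i) - φ (k - 1) := by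
    intro k hk
    rw [Finset.mem_Icc] at hk
    obtain ⟨t, rfl⟩ : ∃ t, k = t + 1 := ⟨k - 1, by omega⟩
    have htn : t < n := by omega
    simp only [Nat.add_sub_cancel]
    have hQt0sum : ∑ i ∈ Finset.range (t + 1), Qt0 i
        = (∑ i ∈ Finset.range (t + 1), Q1 i)
          + (∑ i ∈ Finset.range (t + 1), Q0 i)
          - ∑ i ∈ Finset.range (t + 1), b i := by
      rw [← Finset.sum_add_distrib, ← Finset.sum_sub_distrib]
    have hQt1sum : ∑ j ∈ Finset.Ico t n, Qt1 j
        = b t + ∑ j ∈ Finset.Ico (t + 1) n, b j :=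
      Finset.sum_eq_sum_Ico_succ_bot htn _
    have hψsum : ∑ i ∈ Finset.Ico (t + 1) n, ψ i
        = (∑ i ∈ Finset.Ico (t + 1) n, Q1 i) - ∑ i ∈ Finset.Ico (t + 1) n, b i := by
      simp only [hψ]; rw [Finset.sum_sub_distrib]
    have h1 : ∑ i ∈ Finset.range n, Q1 i
        = (∑ i ∈ Finset.range (t + 1), Q1 i) + ∑ j ∈ Finset.Ico (t + 1) n, Q1 j :=
      (Finset.sum_range_add_sum_Ico Q1 (show t + 1 ≤ n by omega)).symm
    rw [hQt0sum, hQt1sum, uE_tele M Q0 Q1 E (t + 1) (by omega), hD, hψsum, h1,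
      Finset.sum_range_succ]
    simp only [hφ, hb, Nat.sub_sub]
    ring
  apply le_antisymm
  · apply Finset.sup'_le
    intro k hk
    rw [keyL k hk]
    have hk' := Finset.mem_Icc.mp hk
    by_cases hex : ∃ j ∈ Finset.Ico (k - 1) n, 0 < ψ j
    · set S := (Finset.Ico (k - 1) n).filter (fun j => 0 < ψ j) with hS
      have hSne : S.Nonempty := by
        obtain ⟨j, hj1, hj2⟩ := hex
        exact ⟨j, Finset.mem_filter.mpr ⟨hj1, hj2⟩⟩
      set s := S.max' hSne with hs
      have hsS : s ∈ S := S.max'_mem hSne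
      have hs1 := Finset.mem_Ico.mp (Finset.mem_filter.mp hsS).1
      have hsψ : 0 < ψ s := (Finset.mem_filter.mp hsS).2
      have hmem : s + 1 ∈ Finset.Icc 1 n := Finset.mem_Icc.mpr ⟨by omega, by omega⟩
      refine le_trans ?_ (Finset.le_sup' _ hmem)
      rw [keyR (s + 1) hmem]
      simp only [Nat.add_sub_cancel]
      have hz : ∑ i ∈ Finset.Ico (s + 1) n, ψ i = 0 := by
        apply Finset.sum_eq_zero
        intro j hj
        have hj' := Finset.mem_Ico.mp hj
        by_contra hne
        have : 0 < ψ j := lt_of_le_of_ne (hψ0 j) (Ne.symm hne)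
        have : j ∈ S := Finset.mem_filter.mpr ⟨Finset.mem_Ico.mpr ⟨by omega, hj'.2⟩, this⟩
        have := S.le_max' j this
        omega
      rw [hz, horth s hsψ]
      have h1 := Finset.sum_nonneg (fun i _ => hψ0 i)
        (s := Finset.range (k - 1))
      have h2 := hφ0 (k - 1)
      omega
    · push_neg at hex
      refine le_trans ?_ (Finset.le_sup' _ hk)
      rw [keyR k hk]
      have hz : ∑ i ∈ Finset.Ico k n, ψ i = 0 := by
        apply Finset.sum_eq_zero
        intro j hj
        have hj' := Finset.mem_Ico.mp hj
        have := hex j (Finset.mem_Ico.mpr ⟨by omega, hj'.2⟩)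
        have := hψ0 j
        omega
      rw [hz]
      have h1 := Finset.sum_nonneg (fun i _ => hψ0 i)
        (s := Finset.range (k - 1))
      omega
  · apply Finset.sup'_le
    intro k hk
    rw [keyR k hk]
    have hk' := Finset.mem_Icc.mp hk
    by_cases hex : ∃ j ∈ Finset.range (k - 1), 0 < ψ j
    · set S := (Finset.range (k - 1)).filter (fun j => 0 < ψ j) with hS
      have hSne : S.Nonempty := by
        obtain ⟨j, hj1, hj2⟩ := hex
        exact ⟨j, Finset.mem_filter.mpr ⟨hj1, hj2⟩⟩
      set s := S.min' hSne with hs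
      have hsS : s ∈ S := S.min'_mem hSne
      have hs1 := Finset.mem_range.mp (Finset.mem_filter.mp hsS).1
      have hsψ : 0 < ψ s := (Finset.mem_filter.mp hsS).2
      have hmem : s + 1 ∈ Finset.Icc 1 n := Finset.mem_Icc.mpr ⟨by omega, by omega⟩
      refine le_trans ?_ (Finset.le_sup' _ hmem)
      rw [keyL (s + 1) hmem]
      simp only [Nat.add_sub_cancel]
      have hz : ∑ i ∈ Finset.range s, ψ i = 0 := by
        apply Finset.sum_eq_zero
        intro j hj
        have hj' := Finset.mem_range.mp hj
        by_contra hne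
        have : 0 < ψ j := lt_of_le_of_ne (hψ0 j) (Ne.symm hne)
        have : j ∈ S := Finset.mem_filter.mpr ⟨Finset.mem_range.mpr (by omega), this⟩
        have := S.min'_le j this
        omega
      rw [hz, horth s hsψ]
      have h1 := Finset.sum_nonneg (fun i _ => hψ0 i)
        (s := Finset.Ico k n)
      have h2 := hφ0 (k - 1)
      omega
    · push_neg at hex
      refine le_trans ?_ (Finset.le_sup' _ hk)
      rw [keyL k hk]
      have hz : ∑ i ∈ Finset.range (k - 1), ψ i = 0 := by
        apply Finset.sum_eq_zero
        intro j hj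
        have := hex j hj
        have := hψ0 j
        omega
      rw [hz]
      have h1 := Finset.sum_nonneg (fun i _ => hψ0 i)
        (s := Finset.Ico k n)
      omega
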